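/- In the heterogeneous user-cost minority game, the function Θ(g) = Σ_{k=0}^{N-1} C(N-1,k) F(g)^k (1−F(g))^{N−1−k} [r·P(k+1) − gτ] is strictly decreasing in g, satisfies Θ(g) > 0 for g near 0 and Θ(g) < 0 for g near r·P(1)/τ (assuming F strictly increasing with F(0)=0), and hence admits a unique zero g_th ∈ (0, r·P(1)/τ). -/

import Mathlib

open Finset

private def Bn (n : ℕ) (c : ℕ → ℝ) (x : ℝ) : ℝ :=
  ∑ k ∈ range (n+1), (n.choose k : ℝ) * x ^ k * (1-x) ^ (n-k) * c k

private lemma Bn_one (n : ℕ) (x : ℝ) : Bn n (fun _ => 1) x = 1 := by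
  have h := add_pow x (1-x) n
  simp only [add_sub_cancel, one_pow] at h
  rw [Bn]
  calc ∑ k ∈ range (n+1), (n.choose k : ℝ) * x ^ k * (1-x) ^ (n-k) * (1:ℝ)
      = ∑ k ∈ range (n+1), x ^ k * (1-x) ^ (n-k) * (n.choose k : ℝ) :=
        Finset.sum_congr rfl (fun k _ => by ring)
    _ = 1 := h.symm

private lemma Bn_zero (n : ℕ) (c : ℕ → ℝ) : Bn n c 0 = c 0 := by
  rw [Bn, Finset.sum_eq_single 0]
  · simp
  · intro k _ hk
    simp [zero_pow hk]
  · intro h; simp at h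

private lemma Bn_rec (n : ℕ) (c : ℕ → ℝ) (x : ℝ) :
    Bn (n+1) c x = (1-x) * Bn n c x + x * Bn n (fun k => c (k+1)) x := by
  have e1 : Bn (n+1) c x
      = ∑ k ∈ range (n+1), ((n+1).choose (k+1) : ℝ) * x^(k+1) * (1-x)^(n-k) * c (k+1)
        + (1-x)^(n+1) * c 0 := by
    rw [Bn, Finset.sum_range_succ']
    simp [Nat.add_sub_add_right]
  have e2 : x * Bn n (fun k => c (k+1)) x
      = ∑ k ∈ range (n+1), (n.choose k : ℝ) * x^(k+1) * (1-x)^(n-k) * c (k+1) := by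
    rw [Bn, Finset.mul_sum]
    exact Finset.sum_congr rfl (fun k _ => by ring)
  have e3 : (1-x) * Bn n c x
      = ∑ k ∈ range (n+1), (n.choose k : ℝ) * x^k * (1-x)^(n-k+1) * c k := by
    rw [Bn, Finset.mul_sum]
    exact Finset.sum_congr rfl (fun k _ => by ring)
  have e4 : ∑ k ∈ range (n+1), (n.choose k : ℝ) * x^k * (1-x)^(n-k+1) * c k
      = ∑ k ∈ range (n+1), (n.choose (k+1) : ℝ) * x^(k+1) * (1-x)^(n-k) * c (k+1)
        + (1-x)^(n+1) * c 0 := by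
    have h3 := Finset.sum_range_succ'
      (fun j => (n.choose j : ℝ) * x^j * (1-x)^(n-j+1) * c j) (n+1)
    have h4 : ∑ j ∈ range (n+2), (n.choose j : ℝ) * x^j * (1-x)^(n-j+1) * c j
        = ∑ j ∈ range (n+1), (n.choose j : ℝ) * x^j * (1-x)^(n-j+1) * c j := by
      rw [Finset.sum_range_succ]
      simp [Nat.choose_succ_self]
    rw [← h4, h3]
    have hterm : ∀ k ∈ range (n+1),
        (n.choose (k+1) : ℝ) * x^(k+1) * (1-x)^(n-(k+1)+1) * c (k+1)
          = (n.choose (k+1) : ℝ) * x^(k+1) * (1-x)^(n-k) * c (k+1) := by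
      intro k hk
      rw [Finset.mem_range] at hk
      by_cases hkn : k = n
      · subst hkn; simp [Nat.choose_succ_self]
      · have : n - (k+1) + 1 = n - k := by omega
        rw [this]
    rw [Finset.sum_congr rfl hterm]
    simp
  rw [e1, e2, e3, e4]
  -- Pascal: split the choose
  have hsplit : ∀ k ∈ range (n+1),
      ((n+1).choose (k+1) : ℝ) * x^(k+1) * (1-x)^(n-k) * c (k+1)
        = (n.choose (k+1) : ℝ) * x^(k+1) * (1-x)^(n-k) * c (k+1)
          + (n.choose k : ℝ) * x^(k+1) * (1-x)^(n-k) * c (k+1) := by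
    intro k _
    have : ((n+1).choose (k+1) : ℝ) = (n.choose k : ℝ) + (n.choose (k+1) : ℝ) := by
      rw [Nat.choose_succ_succ]; push_cast; ring
    rw [this]; ring
  rw [Finset.sum_congr rfl hsplit, Finset.sum_add_distrib]
  ring

private lemma Bn_anti (n : ℕ) : ∀ (c : ℕ → ℝ), (∀ k, c (k+1) ≤ c k) →
    ∀ x y : ℝ, 0 ≤ x → x ≤ y → y ≤ 1 → Bn n c y ≤ Bn n c x := by
  induction n with
  | zero =>
    intro c _ x y _ _ _
    simp [Bn]
  | succ n ih =>
    intro c hc x y hx hxy hy1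
    have hx1 : x ≤ 1 := hxy.trans hy1
    have hy0 : 0 ≤ y := hx.trans hxy
    have hcs : ∀ k, (fun k => c (k+1)) (k+1) ≤ (fun k => c (k+1)) k := fun k => hc (k+1)
    have hA : Bn n c y ≤ Bn n c x := ih c hc x y hx hxy hy1
    have hS : Bn n (fun k => c (k+1)) y ≤ Bn n (fun k => c (k+1)) x :=
      ih _ hcs x y hx hxy hy1
    -- pointwise shift ≤
    have hSA : ∀ z : ℝ, 0 ≤ z → z ≤ 1 → Bn n (fun k => c (k+1)) z ≤ Bn n c z := by
      intro z hz hz1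
      apply Finset.sum_le_sum
      intro k _
      have hw : 0 ≤ (n.choose k : ℝ) * z ^ k * (1-z) ^ (n-k) := by
        apply mul_nonneg (mul_nonneg (by positivity) (by positivity))
        exact pow_nonneg (by linarith) _
      exact mul_le_mul_of_nonneg_left (hc k) hw
    rw [Bn_rec, Bn_rec]
    have h1 : (1-y) * Bn n c y + y * Bn n (fun k => c (k+1)) y
        ≤ (1-y) * Bn n c x + y * Bn n (fun k => c (k+1)) x := by
      gcongr <;> linarith
    have h2 : (1-y) * Bn n c x + y * Bn n (fun k => c (k+1)) x
        ≤ (1-x) * Bn n c x + x * Bn n (fun k => c (k+1)) x := by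
      have hd : Bn n (fun k => c (k+1)) x ≤ Bn n c x := hSA x hx hx1
      nlinarith [hd, hxy]
    linarith

private lemma Bn_lt (n : ℕ) (hn : 1 ≤ n) (c : ℕ → ℝ) (hc : ∀ k, c (k+1) ≤ c k)
    (hc1 : c 1 < c 0) (p : ℝ) (hp : 0 < p) (hp1 : p ≤ 1) : Bn n c p < c 0 := by
  have hcanti : Antitone c := antitone_nat_of_succ_le hc
  have hw0 : (1-p)^n < 1 := by
    apply pow_lt_one₀ (by linarith) (by linarith) (by omega)
  have hw0' : (0:ℝ) ≤ (1-p)^n := pow_nonneg (by linarith) _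
  -- peel k = 0
  have hpeel : Bn n c p
      = ∑ k ∈ range n, (n.choose (k+1) : ℝ) * p^(k+1) * (1-p)^(n-(k+1)) * c (k+1)
        + (1-p)^n * c 0 := by
    rw [Bn, Finset.sum_range_succ']
    simp
  have hones : ∑ k ∈ range n, (n.choose (k+1) : ℝ) * p^(k+1) * (1-p)^(n-(k+1))
      + (1-p)^n = 1 := by
    have := Bn_one n p
    rw [Bn, Finset.sum_range_succ'] at this
    simpa using this
  have hwk : ∀ k ∈ range n, 0 ≤ (n.choose (k+1) : ℝ) * p^(k+1) * (1-p)^(n-(k+1)) := by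
    intro k _
    apply mul_nonneg (mul_nonneg (by positivity) (by positivity))
    exact pow_nonneg (by linarith) _
  have hbound : ∑ k ∈ range n, (n.choose (k+1) : ℝ) * p^(k+1) * (1-p)^(n-(k+1)) * c (k+1)
      ≤ ∑ k ∈ range n, (n.choose (k+1) : ℝ) * p^(k+1) * (1-p)^(n-(k+1)) * c 1 := by
    apply Finset.sum_le_sum
    intro k hk
    exact mul_le_mul_of_nonneg_left (hcanti (by omega)) (hwk k hk)
  have hsum1 : ∑ k ∈ range n, (n.choose (k+1) : ℝ) * p^(k+1) * (1-p)^(n-(k+1)) * c 1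
      = (1 - (1-p)^n) * c 1 := by
    rw [← Finset.sum_mul]
    have : ∑ k ∈ range n, (n.choose (k+1) : ℝ) * p^(k+1) * (1-p)^(n-(k+1))
        = 1 - (1-p)^n := by linarith
    rw [this]
  have hfin : (1 - (1-p)^n) * c 1 < (1 - (1-p)^n) * c 0 := by
    apply mul_lt_mul_of_pos_left hc1 (by linarith)
  rw [hpeel]
  nlinarith

private lemma Bn_continuous (n : ℕ) (c : ℕ → ℝ) : Continuous (fun x => Bn n c x) := by
  unfold Bn
  apply continuous_finset_sum
  intro k _
  fun_prop

/-- User-dependent heterogeneous cost game: the expected utility of activation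
`Θ(g) = ∑_{k=0}^{N-1} C(N-1,k) F(g)^k (1−F(g))^{N−1−k} (r P(k+1) − gτ)` is
strictly decreasing in `g`, positive at `g = 0`, negative at `g = r P(1)/τ`,
and hence has a unique zero `g_th ∈ (0, r P(1)/τ)`. -/
theorem stmt7 (N : ℕ) (hN : 2 ≤ N) (F : ℝ → ℝ)
    (hFmono : StrictMonoOn F (Set.Ici 0)) (hF0 : F 0 = 0)
    (hF1 : ∀ g, F g ≤ 1) (hFc : ContinuousOn F (Set.Ici 0))
    (P : ℕ → ℝ) (hP : StrictAntiOn P (Set.Icc 1 N))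
    (hPpos : ∀ k ∈ Set.Icc 1 N, 0 < P k)
    (r τ : ℝ) (hr : 0 < r) (hτ : 0 < τ)
    (Θ : ℝ → ℝ)
    (hΘ : ∀ g, Θ g = ∑ k ∈ Finset.range N,
      ((N - 1).choose k : ℝ) * (F g) ^ k * (1 - F g) ^ (N - 1 - k) *
        (r * P (k + 1) - g * τ)) :
    StrictAntiOn Θ (Set.Icc 0 (r * P 1 / τ)) ∧
    0 < Θ 0 ∧ Θ (r * P 1 / τ) < 0 ∧
    ∃! g : ℝ, g ∈ Set.Ioo 0 (r * P 1 / τ) ∧ Θ g = 0 := by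
  set n := N - 1 with hn
  have hn1 : n + 1 = N := by omega
  have hnpos : 1 ≤ n := by omega
  set c : ℕ → ℝ := fun k => r * P (min (k+1) N) with hcdef
  have hc : ∀ k, c (k+1) ≤ c k := by
    intro k
    simp only [hcdef]
    by_cases h : k + 2 ≤ N
    · have e1 : min (k+1+1) N = k+2 := by omega
      have e2 : min (k+1) N = k+1 := by omega
      rw [e1, e2]
      have := hP (Set.mem_Icc.mpr ⟨by omega, by omega⟩)
        (Set.mem_Icc.mpr ⟨by omega, by omega⟩) (by omega : k+1 < k+2)
      nlinarith
    · have e1 : min (k+1+1) N = N := by omega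
      have e2 : min (k+1) N = N := by omega
      rw [e1, e2]
  have hm1 : min (0+1) N = 1 := by omega
  have hm2 : min (1+1) N = 2 := by omega
  have hc0 : c 0 = r * P 1 := by simp only [hcdef, hm1]
  have hc1 : c 1 = r * P 2 := by simp only [hcdef, hm2]
  have hP1pos : 0 < P 1 := hPpos 1 (Set.mem_Icc.mpr ⟨le_refl 1, by omega⟩)
  have hc10 : c 1 < c 0 := by
    rw [hc0, hc1]
    have := hP (Set.mem_Icc.mpr ⟨le_refl 1, by omega⟩)
      (Set.mem_Icc.mpr ⟨by omega, by omega⟩) (by omega : 1 < 2)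
    nlinarith
  -- rewrite Θ
  have hΘ' : ∀ g, Θ g = Bn n c (F g) - g * τ := by
    intro g
    rw [hΘ g, ← hn1]
    have hterm : ∀ k ∈ range (n+1),
        ((N-1).choose k : ℝ) * (F g)^k * (1 - F g)^(N-1-k) * (r * P (k+1) - g * τ)
          = (n.choose k : ℝ) * (F g)^k * (1 - F g)^(n-k) * c k
            - (n.choose k : ℝ) * (F g)^k * (1 - F g)^(n-k) * 1 * (g * τ) := by
      intro k hk
      rw [Finset.mem_range] at hk
      have e : min (k+1) N = k+1 := by omega
      simp only [hcdef, e, ← hn]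
      ring
    rw [Finset.sum_congr rfl hterm, Finset.sum_sub_distrib, ← Finset.sum_mul]
    have : ∑ k ∈ range (n+1), (n.choose k : ℝ) * (F g)^k * (1 - F g)^(n-k) * 1
        = 1 := Bn_one n (F g)
    rw [this, Bn, one_mul]
  set G := r * P 1 / τ with hG
  have hGpos : 0 < G := by positivity
  have hGτ : G * τ = r * P 1 := div_mul_cancel₀ _ (ne_of_gt hτ)
  have hF_nonneg : ∀ g : ℝ, 0 ≤ g → 0 ≤ F g := by
    intro g hg
    rcases eq_or_lt_of_le hg with h | h
    · rw [← h, hF0]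
    · rw [← hF0]
      exact le_of_lt (hFmono (le_refl (0:ℝ)) (le_of_lt h) h)
  -- strict antitone
  have hanti : StrictAntiOn Θ (Set.Icc 0 G) := by
    intro x hx y hy hxy
    rw [hΘ' x, hΘ' y]
    have hx0 : 0 ≤ x := hx.1
    have hy0 : 0 ≤ y := hy.1
    have hFx : F x ≤ F y := le_of_lt (hFmono hx0 hy0 hxy)
    have hB : Bn n c (F y) ≤ Bn n c (F x) :=
      Bn_anti n c hc (F x) (F y) (hF_nonneg x hx0) hFx (hF1 y)
    have : x * τ < y * τ := by nlinarith
    linarith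
  have hΘ0 : 0 < Θ 0 := by
    rw [hΘ' 0, hF0, Bn_zero, hc0]
    nlinarith
  have hΘG : Θ G < 0 := by
    rw [hΘ' G]
    have hFG : 0 < F G := by
      rw [← hF0]; exact hFmono (le_refl (0:ℝ)) (le_of_lt hGpos) hGpos
    have := Bn_lt n hnpos c hc hc10 (F G) hFG (hF1 G)
    rw [hc0, ← hGτ] at this
    linarith
  refine ⟨hanti, hΘ0, hΘG, ?_⟩
  -- continuity
  have hΘcont : ContinuousOn Θ (Set.Icc 0 G) := by
    have : ContinuousOn (fun g => Bn n c (F g) - g * τ) (Set.Icc 0 G) := by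
      apply ContinuousOn.sub
      · exact (Bn_continuous n c).comp_continuousOn
          (hFc.mono (fun z hz => hz.1))
      · fun_prop
    have heq : Θ = fun g => Bn n c (F g) - g * τ := funext hΘ'
    rw [heq]
    exact this
  have hiv : Set.Ioo (Θ G) (Θ 0) ⊆ Θ '' Set.Ioo 0 G :=
    intermediate_value_Ioo' (le_of_lt hGpos) hΘcont
  obtain ⟨g, hg, hΘg⟩ := hiv (Set.mem_Ioo.mpr ⟨hΘG, hΘ0⟩)
  refine ⟨g, ⟨hg, hΘg⟩, ?_⟩
  rintro y ⟨hy, hΘy⟩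
  have hmem : ∀ z : ℝ, z ∈ Set.Ioo 0 G → z ∈ Set.Icc 0 G := fun z hz =>
    ⟨le_of_lt hz.1, le_of_lt hz.2⟩
  exact hanti.injOn (hmem y hy) (hmem g hg) (by rw [hΘy, hΘg])
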